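/- Let G be a semigroupoid: a type with composability predicate Comp and partial multiplication mul such that, whenever Comp s t holds, Comp (mul s t) u holds if and only if Comp t u holds, and in that case Comp s (mul t u) holds with mul (mul s t) u = mul s (mul t u). Assume also left cancellation: Comp g h₁ and Comp g h₂ with mul g h₁ = mul g h₂ imply h₁ = h₂. Let λ_g denote the left regular representation operators on ℓ²(G) = lp (fun _ : G => ℂ) 2, characterized by λ_g(e_h) = e_{mul g h} whenever Comp g h holds and λ_g(e_h) = 0 otherwise. Then λ has transferred left cancellation: for all g, h with Comp g h, one has (λ_g)† ∘ λ_g ∘ λ_h = λ_h, where † denotes the Hilbert-space adjoint. -/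

import Mathlib

open ContinuousLinearMap

private lemma single_ext' {G : Type*} [DecidableEq G]
    (T T' : (lp (fun _ : G => ℂ) 2) →L[ℂ] (lp (fun _ : G => ℂ) 2))
    (h : ∀ i, T (lp.single 2 i 1) = T' (lp.single 2 i 1)) : T = T' := by
  refine ContinuousLinearMap.ext fun f => ?_
  have hf := lp.hasSum_single ENNReal.ofNat_ne_top f
  have h1 : HasSum (fun i => T (lp.single 2 i (f i))) (T f) := T.hasSum hf
  have h2 : HasSum (fun i => T' (lp.single 2 i (f i))) (T' f) := T'.hasSum hf
  have key : ∀ i, T (lp.single 2 i (f i)) = T' (lp.single 2 i (f i)) := by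
    intro i
    have e : lp.single (E := fun _ : G => ℂ) 2 i (f i) = f i • lp.single 2 i 1 := by
      rw [← lp.single_smul]
      norm_num
    rw [e, T.map_smul, T'.map_smul, h i]
  simp only [key] at h1
  exact h1.unique h2

theorem stmt11 {G : Type*} [DecidableEq G]
    (Comp : G → G → Prop) (mul : ∀ g h, Comp g h → G)
    (hsg₁ : ∀ s t u (c : Comp s t), Comp (mul s t c) u ↔ Comp t u)
    (hsg₂ : ∀ s t u (c : Comp s t) (c' : Comp t u) (c₁ : Comp (mul s t c) u),
      ∃ c₂ : Comp s (mul t u c'), mul (mul s t c) u c₁ = mul s (mul t u c') c₂)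
    (hcancel : ∀ g h₁ h₂ (c₁ : Comp g h₁) (c₂ : Comp g h₂),
      mul g h₁ c₁ = mul g h₂ c₂ → h₁ = h₂)
    (Λ : G → (lp (fun _ : G => ℂ) 2 →L[ℂ] lp (fun _ : G => ℂ) 2))
    (hΛ₁ : ∀ g h (c : Comp g h), Λ g (lp.single 2 h 1) = lp.single 2 (mul g h c) 1)
    (hΛ₂ : ∀ g h, ¬ Comp g h → Λ g (lp.single 2 h 1) = 0) :
    ∀ g h, Comp g h → adjoint (Λ g) ∘L Λ g ∘L Λ h = Λ h := by
  intro g h c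
  -- key: adjoint (Λ g) (Λ g e_k) = e_k whenever Comp g k
  have key : ∀ k (ck : Comp g k),
      adjoint (Λ g) (Λ g (lp.single 2 k 1)) = lp.single 2 k 1 := by
    intro k ck
    apply lp.ext
    funext m
    have coord : ∀ x : lp (fun _ : G => ℂ) 2,
        (x : ∀ _ : G, ℂ) m = inner ℂ (lp.single 2 m (1 : ℂ)) x := by
      intro x
      rw [lp.inner_single_left]
      simp
    rw [coord, coord, adjoint_inner_right]
    by_cases cm : Comp g m
    · rw [hΛ₁ g k ck, hΛ₁ g m cm, lp.inner_single_left, lp.inner_single_left]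
      by_cases hkm : k = m
      · subst hkm
        rw [lp.single_apply, lp.single_apply, Pi.single_eq_same, Pi.single_eq_same]
      · have h1 : ¬ (mul g k ck = mul g m cm) := fun e => hkm (hcancel g k m ck cm e)
        rw [lp.single_apply, lp.single_apply,
          Pi.single_eq_of_ne (fun e => h1 e.symm), Pi.single_eq_of_ne (fun e => hkm e.symm)]
    · rw [hΛ₂ g m cm, hΛ₁ g k ck, lp.inner_single_left, lp.single_apply,
        Pi.single_eq_of_ne (fun e : m = k => cm (by rw [e]; exact ck))]
      simp
  apply single_ext'
  intro k
  simp only [ContinuousLinearMap.comp_apply]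
  by_cases ck : Comp h k
  · rw [hΛ₁ h k ck]
    have c₁ : Comp (mul g h c) k := (hsg₁ g h k c).mpr ck
    obtain ⟨c₂, -⟩ := hsg₂ g h k c ck c₁
    exact key _ c₂
  · rw [hΛ₂ h k ck]
    simp
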